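/- The q-symmetrization identity Σ_{σ∈S_r} σ( ∏_{i<j} (x_i − q x_j)/(x_i − x_j) ) = [r]!_q, where [r]!_q = ∏_{s=1}^r (1+q+⋯+q^{s-1}). -/

import Mathlib

open Finset Polynomial

lemma pairs_eq {M : Type*} [CommMonoid M] (n : ℕ) (g : Fin n → Fin n → M) :
    ∏ p ∈ Finset.univ.filter (fun p : Fin n × Fin n => p.1 < p.2), g p.1 p.2
      = ∏ i : Fin n, ∏ j ∈ Ioi i, g i j := by
  rw [Finset.prod_sigma']
  refine Finset.prod_bij' (fun p _ => (⟨p.1, p.2⟩ : (_ : Fin n) × Fin n))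
    (fun x _ => (x.1, x.2)) ?_ ?_ ?_ ?_ ?_ <;>
    simp [Finset.mem_sigma, Finset.mem_Ioi]

lemma inner_gk {ι : Type*} [DecidableEq ι] (q : ℂ) (s : Finset ι) :
    ∀ (v : ι → ℂ), Set.InjOn v s →
      ∑ k ∈ s, ∏ j ∈ s.erase k, (v k - q * v j) / (v k - v j)
        = ∑ t ∈ Finset.range s.card, q ^ t := by
  induction s using Finset.strongInduction with
  | _ s ih =>
  intro v hv
  rcases s.eq_empty_or_nonempty with rfl | hne
  · simp
  have hsub : ∀ k ∈ s, ∀ j ∈ s.erase k, v k - v j ≠ 0 := by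
    intro k hk j hj h
    exact (Finset.mem_erase.mp hj).1 (hv (Finset.mem_of_mem_erase hj) hk (by linear_combination -h))
  by_cases hq : q = 1
  · subst hq
    have : ∀ k ∈ s, ∏ j ∈ s.erase k, (v k - 1 * v j) / (v k - v j) = 1 := by
      intro k hk
      refine Finset.prod_eq_one fun j hj => ?_
      rw [one_mul, div_self (hsub k hk j hj)]
    rw [Finset.sum_congr rfl this]
    simp
  obtain ⟨n, hn⟩ : ∃ n, s.card = n + 1 := ⟨s.card - 1, (Nat.succ_pred_eq_of_pos hne.card_pos).symm⟩
  by_cases hz : ∃ m ∈ s, v m = 0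
  · obtain ⟨m, hm, hm0⟩ := hz
    rw [← Finset.add_sum_erase _ _ hm]
    have h1 : ∏ j ∈ s.erase m, (v m - q * v j) / (v m - v j) = q ^ n := by
      have hc : ∀ j ∈ s.erase m, (v m - q * v j) / (v m - v j) = q := by
        intro j hj
        have hvj : v j ≠ 0 := by
          intro h; exact (Finset.mem_erase.mp hj).1 (hv (Finset.mem_of_mem_erase hj) hm (by rw [h, hm0]))
        rw [hm0]
        field_simp
        ring
      rw [Finset.prod_congr rfl hc, Finset.prod_const, Finset.card_erase_of_mem hm, hn,
        Nat.add_sub_cancel]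
    have h2 : ∀ k ∈ s.erase m, ∏ j ∈ s.erase k, (v k - q * v j) / (v k - v j)
        = ∏ j ∈ (s.erase m).erase k, (v k - q * v j) / (v k - v j) := by
      intro k hk
      obtain ⟨hkm, hks⟩ := Finset.mem_erase.mp hk
      have hmk : m ∈ s.erase k := Finset.mem_erase.mpr ⟨fun h => hkm h.symm, hm⟩
      rw [← Finset.mul_prod_erase _ _ hmk, hm0, Finset.erase_right_comm]
      have hvk : v k ≠ 0 := by
        intro h; exact hkm (hv hks hm (by rw [h, hm0]))
      field_simp
      ring
    rw [h1, Finset.sum_congr rfl h2,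
      ih (s.erase m) (Finset.erase_ssubset hm) v (hv.mono (by simp [Finset.erase_subset]))]
    rw [Finset.card_erase_of_mem hm, hn, Nat.add_sub_cancel, Finset.sum_range_succ]
    ring
  · push_neg at hz
    -- Lagrange case
    set P1 : ℂ[X] := ∏ j ∈ s, (X - C (q * v j)) with hP1
    set P2 : ℂ[X] := ∏ j ∈ s, (X - C (v j)) with hP2
    have hm1 : P1.Monic := monic_prod_of_monic _ _ fun j _ => monic_X_sub_C _
    have hm2 : P2.Monic := monic_prod_of_monic _ _ fun j _ => monic_X_sub_C _
    have hd1 : P1.degree = s.card := by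
      rw [hP1, degree_prod]
      simp only [degree_X_sub_C, Finset.sum_const, nsmul_eq_mul, mul_one]
    have hd2 : P2.degree = s.card := by
      rw [hP2, degree_prod]
      simp only [degree_X_sub_C, Finset.sum_const, nsmul_eq_mul, mul_one]
    have hdeg : (P1 - P2).degree < (s.card : ℕ) := by
      have := degree_sub_lt (hd1.trans hd2.symm) hm1.ne_zero (by rw [hm1.leadingCoeff, hm2.leadingCoeff])
      rwa [hd1] at this
    have hL := Lagrange.eq_interpolate hv hdeg
    have hE := congrArg (Polynomial.eval 0) hL
    set P : ℂ := ∏ j ∈ s, v j with hP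
    have hPne : P ≠ 0 := Finset.prod_ne_zero_iff.mpr hz
    have hl : Polynomial.eval 0 (P1 - P2)
        = (-1 : ℂ) ^ (n + 1) * q ^ (n + 1) * P - (-1 : ℂ) ^ (n + 1) * P := by
      rw [eval_sub, hP1, hP2, eval_prod, eval_prod]
      simp only [eval_sub, eval_X, eval_C, zero_sub]
      have A : ∏ x ∈ s, -(q * v x) = (-1 : ℂ) ^ (n + 1) * q ^ (n + 1) * P := by
        have e1 : ∀ x ∈ s, -(q * v x) = (-q) * v x := fun _ _ => by ring
        rw [Finset.prod_congr rfl e1, Finset.prod_mul_distrib, Finset.prod_const, hn,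
          neg_pow, hP, mul_assoc]
      have B : ∏ x ∈ s, -(v x) = (-1 : ℂ) ^ (n + 1) * P := by
        have e2 : ∀ x ∈ s, -(v x) = (-1) * v x := fun _ _ => by ring
        rw [Finset.prod_congr rfl e2, Finset.prod_mul_distrib, Finset.prod_const, hn, hP]
      rw [A, B]
    have hr : Polynomial.eval 0 (Lagrange.interpolate s v fun i => Polynomial.eval (v i) (P1 - P2))
        = ((1 - q) * (-1 : ℂ) ^ n * P) *
            ∑ k ∈ s, ∏ j ∈ s.erase k, (v k - q * v j) / (v k - v j) := by
      rw [Lagrange.interpolate_apply, Polynomial.eval_finset_sum, Finset.mul_sum]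
      refine Finset.sum_congr rfl fun i hi => ?_
      rw [Polynomial.eval_mul, Polynomial.eval_C]
      have hf : Polynomial.eval (v i) (P1 - P2)
          = ((1 - q) * v i) * ∏ j ∈ s.erase i, (v i - q * v j) := by
        rw [eval_sub, hP1, hP2, eval_prod, eval_prod]
        simp only [eval_sub, eval_X, eval_C]
        rw [Finset.prod_eq_zero (f := fun x => v i - v x) hi (sub_self _), sub_zero,
          ← Finset.mul_prod_erase _ _ hi]
        ring
      have hb : Polynomial.eval 0 (Lagrange.basis s v i)
          = ∏ j ∈ s.erase i, ((v i - v j)⁻¹ * (0 - v j)) := by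
        rw [Lagrange.basis, Polynomial.eval_prod]
        refine Finset.prod_congr rfl fun j hj => ?_
        rw [Lagrange.basisDivisor, Polynomial.eval_mul, Polynomial.eval_C, eval_sub, eval_X, eval_C]
      rw [hf, hb]
      have key : (∏ j ∈ s.erase i, (v i - q * v j)) * ∏ j ∈ s.erase i, ((v i - v j)⁻¹ * (0 - v j))
          = (∏ j ∈ s.erase i, (-(v j))) * ∏ j ∈ s.erase i, (v i - q * v j) / (v i - v j) := by
        rw [← Finset.prod_mul_distrib, ← Finset.prod_mul_distrib]
        refine Finset.prod_congr rfl fun j hj => ?_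
        rw [div_eq_mul_inv]; ring
      have hvP : v i * ∏ j ∈ s.erase i, (-(v j)) = (-1 : ℂ) ^ n * P := by
        have e2 : ∀ j ∈ s.erase i, -(v j) = (-1) * v j := fun _ _ => by ring
        rw [Finset.prod_congr rfl e2, Finset.prod_mul_distrib, Finset.prod_const,
          Finset.card_erase_of_mem hi, hn, Nat.add_sub_cancel, hP, ← Finset.mul_prod_erase _ _ hi]
        ring
      linear_combination (1 - q) * v i * key
        + ((1 - q) * ∏ j ∈ s.erase i, (v i - q * v j) / (v i - v j)) * hvP
    rw [hl, hr] at hE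
    have hq1 : q - 1 ≠ 0 := sub_ne_zero.mpr hq
    rw [hn, geom_sum_eq hq, eq_div_iff hq1]
    apply mul_left_cancel₀ (mul_ne_zero (pow_ne_zero n (by norm_num : (-1:ℂ) ≠ 0)) hPne)
    linear_combination hE

lemma main_aux (q : ℂ) : ∀ (r : ℕ) (x : Fin r → ℂ), (∀ i j : Fin r, i ≠ j → x i ≠ x j) →
    (∑ σ : Equiv.Perm (Fin r),
        ∏ p ∈ Finset.univ.filter (fun p : Fin r × Fin r => p.1 < p.2),
          (x (σ p.1) - q * x (σ p.2)) / (x (σ p.1) - x (σ p.2)))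
      = ∏ s ∈ Finset.range r, ∑ t ∈ Finset.range (s + 1), q ^ t := by
  intro r
  induction r with
  | zero =>
    intro x hx
    simp
  | succ r IH =>
    intro x hx
    rw [← Equiv.sum_comp (Equiv.Perm.decomposeFin.symm :
        (Fin (r+1) × Equiv.Perm (Fin r)) ≃ Equiv.Perm (Fin (r+1)))
      (fun σ : Equiv.Perm (Fin (r+1)) =>
        ∏ p ∈ Finset.univ.filter (fun p : Fin (r+1) × Fin (r+1) => p.1 < p.2),
          (x (σ p.1) - q * x (σ p.2)) / (x (σ p.1) - x (σ p.2))), Fintype.sum_prod_type]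
    have hginj : ∀ p : Fin (r+1), Function.Injective (fun k : Fin r => Equiv.swap 0 p k.succ) :=
      fun p a b h => Fin.succ_injective _ ((Equiv.swap 0 p).injective h)
    have himg : ∀ p : Fin (r+1),
        Finset.univ.image (fun k : Fin r => Equiv.swap 0 p k.succ) = Finset.univ.erase p := by
      intro p
      apply Finset.eq_of_subset_of_card_le
      · intro b hb
        simp only [Finset.mem_image, Finset.mem_univ, true_and] at hb
        obtain ⟨k, hk⟩ := hb
        refine Finset.mem_erase.mpr ⟨?_, Finset.mem_univ _⟩
        intro h
        apply Fin.succ_ne_zero k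
        apply (Equiv.swap 0 p).injective
        rw [hk, h, Equiv.swap_apply_left]
      · rw [Finset.card_erase_of_mem (Finset.mem_univ _),
          Finset.card_image_of_injective _ (hginj p)]
        simp
    have hterm : ∀ (p : Fin (r+1)) (e : Equiv.Perm (Fin r)),
        (∏ pr ∈ Finset.univ.filter (fun pr : Fin (r+1) × Fin (r+1) => pr.1 < pr.2),
            (x (Equiv.Perm.decomposeFin.symm (p, e) pr.1) -
                q * x (Equiv.Perm.decomposeFin.symm (p, e) pr.2)) /
              (x (Equiv.Perm.decomposeFin.symm (p, e) pr.1) -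
                x (Equiv.Perm.decomposeFin.symm (p, e) pr.2)))
          = (∏ b ∈ Finset.univ.erase p, (x p - q * x b) / (x p - x b)) *
            ∏ pr ∈ Finset.univ.filter (fun pr : Fin r × Fin r => pr.1 < pr.2),
              ((fun k => x (Equiv.swap 0 p k.succ)) (e pr.1) -
                  q * (fun k => x (Equiv.swap 0 p k.succ)) (e pr.2)) /
                ((fun k => x (Equiv.swap 0 p k.succ)) (e pr.1) -
                  (fun k => x (Equiv.swap 0 p k.succ)) (e pr.2)) := by
      intro p e
      rw [pairs_eq (r+1) (fun a b =>
          (x (Equiv.Perm.decomposeFin.symm (p, e) a) - q * x (Equiv.Perm.decomposeFin.symm (p, e) b)) /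
            (x (Equiv.Perm.decomposeFin.symm (p, e) a) - x (Equiv.Perm.decomposeFin.symm (p, e) b))),
        pairs_eq r (fun a b =>
          ((fun k => x (Equiv.swap 0 p k.succ)) (e a) - q * (fun k => x (Equiv.swap 0 p k.succ)) (e b)) /
            ((fun k => x (Equiv.swap 0 p k.succ)) (e a) - (fun k => x (Equiv.swap 0 p k.succ)) (e b))),
        Fin.prod_univ_succ]
      congr 1
      · rw [Fin.prod_Ioi_zero]
        simp only [Equiv.Perm.decomposeFin_symm_apply_zero,
          Equiv.Perm.decomposeFin_symm_apply_succ]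
        rw [Equiv.prod_comp e (fun k =>
            (x p - q * x (Equiv.swap 0 p k.succ)) / (x p - x (Equiv.swap 0 p k.succ))),
          ← himg p, Finset.prod_image (fun a _ b _ h => hginj p h)]
      · refine Finset.prod_congr rfl fun i _ => ?_
        rw [Fin.prod_Ioi_succ]
        refine Finset.prod_congr rfl fun j _ => ?_
        simp only [Equiv.Perm.decomposeFin_symm_apply_succ]
    rw [Finset.sum_congr rfl fun p _ => Finset.sum_congr rfl fun e _ => hterm p e]
    have hy : ∀ p : Fin (r+1), ∀ i j : Fin r, i ≠ j →
        x (Equiv.swap 0 p i.succ) ≠ x (Equiv.swap 0 p j.succ) := by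
      intro p i j hij
      exact hx _ _ fun h => hij (hginj p h)
    have hsume : ∀ p : Fin (r+1),
        (∑ e : Equiv.Perm (Fin r),
          ∏ pr ∈ Finset.univ.filter (fun pr : Fin r × Fin r => pr.1 < pr.2),
            ((fun k => x (Equiv.swap 0 p k.succ)) (e pr.1) -
                q * (fun k => x (Equiv.swap 0 p k.succ)) (e pr.2)) /
              ((fun k => x (Equiv.swap 0 p k.succ)) (e pr.1) -
                (fun k => x (Equiv.swap 0 p k.succ)) (e pr.2)))
          = ∏ s ∈ Finset.range r, ∑ t ∈ Finset.range (s + 1), q ^ t :=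
      fun p => IH (fun k => x (Equiv.swap 0 p k.succ)) (hy p)
    calc (∑ p : Fin (r+1), ∑ e : Equiv.Perm (Fin r),
            (∏ b ∈ Finset.univ.erase p, (x p - q * x b) / (x p - x b)) * _)
        = ∑ p : Fin (r+1), (∏ b ∈ Finset.univ.erase p, (x p - q * x b) / (x p - x b)) *
            (∏ s ∈ Finset.range r, ∑ t ∈ Finset.range (s + 1), q ^ t) := by
          refine Finset.sum_congr rfl fun p _ => ?_
          rw [← Finset.mul_sum, hsume p]
      _ = (∑ t ∈ Finset.range (r + 1), q ^ t) *
            ∏ s ∈ Finset.range r, ∑ t ∈ Finset.range (s + 1), q ^ t := by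
          rw [← Finset.sum_mul]
          congr 1
          have := inner_gk q (Finset.univ : Finset (Fin (r+1))) x
            (fun i _ j _ h => by
              by_contra hij
              exact hx i j hij h)
          simpa using this
      _ = ∏ s ∈ Finset.range (r + 1), ∑ t ∈ Finset.range (s + 1), q ^ t := by
          rw [Finset.prod_range_succ, mul_comm]

/-- **The `q`-symmetrization identity** (Gindikin–Karpelevich/Macdonald):
`Σ_{σ∈S_r} σ( ∏_{i<j} (x_i - q x_j)/(x_i - x_j) ) = [r]!_q`, where
`[r]!_q = ∏_{s=1}^r (1 + q + ⋯ + q^{s-1})` (stated pointwise at any point with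
pairwise distinct coordinates). -/
theorem stmt14 (r : ℕ) (q : ℂ) (x : Fin r → ℂ)
    (hx : ∀ i j : Fin r, i ≠ j → x i ≠ x j) :
    (∑ σ : Equiv.Perm (Fin r),
        ∏ p ∈ Finset.univ.filter (fun p : Fin r × Fin r => p.1 < p.2),
          (x (σ p.1) - q * x (σ p.2)) / (x (σ p.1) - x (σ p.2))) =
      ∏ s ∈ Finset.range r, ∑ t ∈ Finset.range (s + 1), q ^ t :=
  main_aux q r x hx
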